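/- For every punctured convex Euclidean n-gon P* (i.e., for every placement of the puncture in the interior of the convex n-gon), the natural simplicial embedding of the geometric flip-graph F(P*) into the topological flip-graph T_n is never surjective: there exists a triangulation of the once-punctured disk Δ*_n whose isotopy class is not realized by any triangulation of P*. -/

import Mathlib

open Set Metric Bornology

noncomputable section

/-- Points of the Euclidean plane. -/
abbrev Pt : Type := EuclideanSpace ℝ (Fin 2)

/-- The closed line segment with the given (unordered) pair of endpoints. -/
def sseg (e : Sym2 Pt) : Set Pt :=
  Sym2.lift ⟨fun x y => segment ℝ x y, fun x y => segment_symm ℝ x y⟩ e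

/-- The relative interior (open segment) of the line segment with the given
(unordered) pair of endpoints. -/
def oseg (e : Sym2 Pt) : Set Pt :=
  Sym2.lift ⟨fun x y => openSegment ℝ x y, fun x y => openSegment_symm ℝ x y⟩ e

/-- Two line segments are non-crossing when they share an endpoint or
have disjoint (relative) interiors. -/
def SegNoncross (e f : Sym2 Pt) : Prop :=
  (∃ x : Pt, x ∈ e ∧ x ∈ f) ∨ Disjoint (oseg e) (oseg f)

/-- A triangulation with edges chosen among the set `A` of allowed segments
(recorded as unordered pairs of endpoints): a maximal subset of `A` consisting of
pairwise non-crossing segments. -/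
def IsGeomTriangulation (A : Set (Sym2 Pt)) (T : Set (Sym2 Pt)) : Prop :=
  T ⊆ A ∧ (∀ e ∈ T, ∀ f ∈ T, SegNoncross e f) ∧
    ∀ e ∈ A, (∀ f ∈ T, SegNoncross e f) → e ∈ T

/-- Two sets (e.g. triangulations) differ by exactly one element (a flip). -/
def FlipAdj {α : Type*} (S T : Set α) : Prop :=
  ∃ e f, e ∈ S ∧ e ∉ T ∧ f ∈ T ∧ f ∉ S ∧ S \ {e} = T \ {f}

/-- The flip-graph on the collection of triangulations singled out by the
predicate `Tri`: two triangulations are adjacent when they differ by exactly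
one element. -/
def FlipGraph {α : Type*} (Tri : Set α → Prop) : SimpleGraph {S : Set α // Tri S} where
  Adj S T := FlipAdj S.1 T.1
  symm := by
    constructor
    rintro S T ⟨e, f, he, he', hf, hf', hst⟩
    exact ⟨f, e, hf, hf', he, he', hst.symm⟩
  loopless := by
    constructor
    rintro S ⟨e, f, he, he', hf, hf', hst⟩
    exact he' he

/-- A convex polygon with `n` vertices: `n` distinct points of the plane in strictly
convex position. -/
structure ConvexPolygon (n : ℕ) where
  vtx : Fin n → Pt
  three_le : 3 ≤ n
  inj : Function.Injective vtx
  convexPos : ∀ i : Fin n, vtx i ∉ convexHull ℝ (Set.range vtx \ {vtx i})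

/-- The vertex set of a convex polygon. -/
def ConvexPolygon.V {n : ℕ} (P : ConvexPolygon n) : Set Pt := Set.range P.vtx

/-- The region (convex body) bounded by a convex polygon. -/
def ConvexPolygon.body {n : ℕ} (P : ConvexPolygon n) : Set Pt := convexHull ℝ P.V

/-- The allowed segments for triangulations of a convex polygon `P`: segments joining
two distinct vertices of `P`, whose relative interior avoids the vertices. -/
def chordEdges {n : ℕ} (P : ConvexPolygon n) : Set (Sym2 Pt) :=
  {e | ∃ x y, e = s(x, y) ∧ x ∈ P.V ∧ y ∈ P.V ∧ x ≠ y ∧ Disjoint (oseg e) P.V}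

/-- The allowed segments for triangulations of the punctured polygon `P⋆` obtained by
marking a point `p` inside the convex polygon `P`: segments joining two distinct
marked points (vertices of `P` or the puncture `p`) whose relative interior avoids
all the marked points. -/
def punctEdges {n : ℕ} (P : ConvexPolygon n) (p : Pt) : Set (Sym2 Pt) :=
  {e | ∃ x y, e = s(x, y) ∧ x ∈ insert p P.V ∧ y ∈ insert p P.V ∧ x ≠ y ∧
    Disjoint (oseg e) (insert p P.V)}

/-- The flip-graph of a convex polygon `P` (the graph `𝒜ₙ` of the associahedron). -/
def polyGraph {n : ℕ} (P : ConvexPolygon n) :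
    SimpleGraph {S : Set (Sym2 Pt) // IsGeomTriangulation (chordEdges P) S} :=
  FlipGraph _

/-- The flip-graph `ℱ(P⋆)` of the punctured polygon `P⋆`. -/
def punctGraph {n : ℕ} (P : ConvexPolygon n) (p : Pt) :
    SimpleGraph {S : Set (Sym2 Pt) // IsGeomTriangulation (punctEdges P p) S} :=
  FlipGraph _

/-- An arc in the surface `K` (a topological disk) with set of marked points `M`:
a simple curve joining two marked points, whose interior avoids all marked points
and stays in `K`, and which, if it is a loop, is essential (it encloses a marked
point). -/
structure PreArc (K M : Set Pt) where
  f : ℝ → Pt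
  cont : ContinuousOn f (Icc 0 1)
  ends0 : f 0 ∈ M
  ends1 : f 1 ∈ M
  inj : InjOn f (Ioo 0 1)
  ne_ends : ∀ t ∈ Ioo (0:ℝ) 1, f t ≠ f 0 ∧ f t ≠ f 1
  mem : ∀ t ∈ Ioo (0:ℝ) 1, f t ∈ K \ M
  essential : f 0 = f 1 → ∃ q ∈ M, q ≠ f 0 ∧
    IsBounded (connectedComponentIn ((f '' Icc 0 1)ᶜ) q)

/-- `H` is an isotopy from the arc `a` to the arc `b`: a continuous family of arcs
fixing the endpoints. -/
def IsIsotopy {K M : Set Pt} (a b : PreArc K M) (H : ℝ → ℝ → Pt) : Prop :=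
  ContinuousOn (Function.uncurry H) (Icc 0 1 ×ˢ Icc 0 1) ∧
  (∀ t ∈ Icc (0:ℝ) 1, H 0 t = a.f t) ∧ (∀ t ∈ Icc (0:ℝ) 1, H 1 t = b.f t) ∧
  (∀ s ∈ Icc (0:ℝ) 1, H s 0 = a.f 0 ∧ H s 1 = a.f 1) ∧
  (∀ s ∈ Icc (0:ℝ) 1, ∃ c : PreArc K M, ∀ t ∈ Icc (0:ℝ) 1, c.f t = H s t)

/-- Two arcs are isotopic when there is an isotopy between them. -/
def Isotopic {K M : Set Pt} (a b : PreArc K M) : Prop := ∃ H, IsIsotopy a b H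

/-- An isotopy class of arcs in the disk `K` with marked points `M`. -/
def Arc (K M : Set Pt) := Quot (@Isotopic K M)

/-- The isotopy class of an arc. -/
def PreArc.cls {K M : Set Pt} (a : PreArc K M) : Arc K M := Quot.mk _ a

/-- The interior of an arc (the curve minus its endpoints). -/
def PreArc.intIm {K M : Set Pt} (a : PreArc K M) : Set Pt := a.f '' Ioo 0 1

/-- Two isotopy classes of arcs are non-crossing when they admit representatives
that share an endpoint or have disjoint interiors. -/
def ArcNoncross {K M : Set Pt} (γ δ : Arc K M) : Prop :=
  ∃ a b : PreArc K M, a.cls = γ ∧ b.cls = δ ∧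
    ((∃ x, (x = a.f 0 ∨ x = a.f 1) ∧ (x = b.f 0 ∨ x = b.f 1)) ∨
      Disjoint a.intIm b.intIm)

/-- A triangulation of the disk `K` with marked points `M`: a maximal set of pairwise
non-crossing isotopy classes of arcs. -/
def IsTopTriangulation (K M : Set Pt) (T : Set (Arc K M)) : Prop :=
  (∀ γ ∈ T, ∀ δ ∈ T, ArcNoncross γ δ) ∧ ∀ γ, (∀ δ ∈ T, ArcNoncross γ δ) → γ ∈ T

/-- The (topological) flip-graph of the disk `K` with marked points `M`: two
triangulations are adjacent when they differ by exactly one arc. -/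
def topGraph (K M : Set Pt) :
    SimpleGraph {T : Set (Arc K M) // IsTopTriangulation K M T} :=
  FlipGraph _

/-- The straight arc realizing the line segment from `x` to `y`. -/
def segPreArc (K M : Set Pt) (x y : Pt) (hx : x ∈ M) (hy : y ∈ M) (hxy : x ≠ y)
    (hsub : openSegment ℝ x y ⊆ K \ M) : PreArc K M where
  f := fun t => x + t • (y - x)
  cont := (continuous_const.add (continuous_id.smul continuous_const)).continuousOn
  ends0 := by simpa using hx
  ends1 := by simpa using hy
  inj := by
    intro s hs t ht h
    have h' : (s - t) • (y - x) = 0 := by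
      rw [sub_smul]
      have := add_left_cancel h
      rw [this]; abel
    rcases smul_eq_zero.mp h' with h'' | h''
    · linarith [sub_eq_zero.mp h'']
    · exact absurd (sub_eq_zero.mp h'') (fun hh => hxy hh.symm)
  ne_ends := by
    intro t ht
    constructor
    · intro h
      have h' : (t - 0) • (y - x) = 0 := by
        rw [sub_smul]
        simp only [zero_smul, sub_eq_zero]
        simpa using h
      rcases smul_eq_zero.mp h' with h'' | h''
      · rw [sub_zero] at h''; exact absurd h'' (ne_of_gt ht.1)
      · exact hxy (sub_eq_zero.mp h'').symm
    · intro h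
      have h' : (t - 1) • (y - x) = 0 := by
        rw [sub_smul, one_smul, sub_eq_zero]
        have : x + t • (y - x) = x + (y - x) := by simpa using h
        have := add_left_cancel this
        rw [this]
      rcases smul_eq_zero.mp h' with h'' | h''
      · have : t = 1 := by linarith [sub_eq_zero.mp h'']
        exact absurd this (ne_of_lt ht.2)
      · exact hxy (sub_eq_zero.mp h'').symm
  mem := by
    intro t ht
    apply hsub
    rw [openSegment_eq_image' ℝ x y]
    exact ⟨t, ht, rfl⟩
  essential := by
    intro h
    exfalso
    apply hxy
    have h2 : x + (0:ℝ) • (y - x) = x + (1:ℝ) • (y - x) := h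
    simp only [zero_smul, add_zero, one_smul] at h2
    rw [h2]
    abel

/-- The set of isotopy classes of arcs realized by the straight segments of a set `S`
of segments (recorded by their unordered pairs of endpoints): the simplicial image of
a geometric triangulation inside the topological flip-graph. -/
def topOf (K M : Set Pt) (S : Set (Sym2 Pt)) : Set (Arc K M) :=
  {γ | ∃ x y, ∃ (hx : x ∈ M) (hy : y ∈ M) (hxy : x ≠ y)
      (hsub : openSegment ℝ x y ⊆ K \ M),
    s(x, y) ∈ S ∧ γ = (segPreArc K M x y hx hy hxy hsub).cls}

/-- A topological triangulation of the punctured polygon `P⋆` (the disk `P.body` with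
marked points the vertices of `P` and the puncture `p`) lies in the image of the
natural simplicial embedding of the geometric flip-graph `ℱ(P⋆)` when it is the
set of isotopy classes of the segments of a geometric triangulation of `P⋆`. -/
def InGeomImage {n : ℕ} (P : ConvexPolygon n) (p : Pt)
    (A : Set (Arc P.body (insert p P.V))) : Prop :=
  ∃ S : Set (Sym2 Pt), IsGeomTriangulation (punctEdges P p) S ∧
    A = topOf P.body (insert p P.V) S
section Aux

variable {K M : Set Pt}

lemma Isotopic.ends_eq {a b : PreArc K M} (h : Isotopic a b) :
    (a.f 0, a.f 1) = (b.f 0, b.f 1) := by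
  obtain ⟨H, _, _, h1, hends, _⟩ := h
  have e0 : H 1 0 = a.f 0 := (hends 1 (by norm_num)).1
  have e0' : H 1 0 = b.f 0 := h1 0 (by norm_num)
  have e1 : H 1 1 = a.f 1 := (hends 1 (by norm_num)).2
  have e1' : H 1 1 = b.f 1 := h1 1 (by norm_num)
  rw [← e0, ← e1, e0', e1']

/-- The (ordered) pair of endpoints of an arc: an isotopy invariant. -/
def arcEnds : Arc K M → Pt × Pt :=
  Quot.lift (fun a => (a.f 0, a.f 1)) (fun _ _ h => h.ends_eq)

lemma arcEnds_cls (a : PreArc K M) : arcEnds a.cls = (a.f 0, a.f 1) := rfl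

lemma arcNoncross_refl (γ : Arc K M) : ArcNoncross γ γ := by
  induction γ using Quot.ind with
  | _ a => exact ⟨a, a, rfl, rfl, Or.inl ⟨a.f 0, Or.inl rfl, Or.inl rfl⟩⟩

lemma arcNoncross_symm {γ δ : Arc K M} (h : ArcNoncross γ δ) : ArcNoncross δ γ := by
  obtain ⟨a, b, ha, hb, h⟩ := h
  refine ⟨b, a, hb, ha, ?_⟩
  rcases h with ⟨x, hx1, hx2⟩ | hd
  · exact Or.inl ⟨x, hx2, hx1⟩
  · exact Or.inr hd.symm

lemma exists_topTriangulation (T₀ : Set (Arc K M))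
    (h₀ : ∀ γ ∈ T₀, ∀ δ ∈ T₀, ArcNoncross γ δ) :
    ∃ T, T₀ ⊆ T ∧ IsTopTriangulation K M T := by
  obtain ⟨T, hT₀, hmax⟩ := zorn_subset_nonempty
    {T : Set (Arc K M) | ∀ γ ∈ T, ∀ δ ∈ T, ArcNoncross γ δ}
    (fun c hc hchain _ => ⟨⋃₀ c, fun γ hγ δ hδ => by
      obtain ⟨s₁, hs₁, hγ⟩ := hγ
      obtain ⟨s₂, hs₂, hδ⟩ := hδ
      rcases hchain.total hs₁ hs₂ with h | h
      · exact hc hs₂ γ (h hγ) δ hδ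
      · exact hc hs₁ γ hγ δ (h hδ), fun s hs => subset_sUnion_of_mem hs⟩)
    T₀ h₀
  refine ⟨T, hT₀, hmax.prop, fun γ hγ => ?_⟩
  have hT' : insert γ T ∈ {T : Set (Arc K M) | ∀ γ ∈ T, ∀ δ ∈ T, ArcNoncross γ δ} := by
    intro a ha b hb
    rcases ha with ha | ha <;> rcases hb with hb | hb
    · rw [ha, hb]; exact arcNoncross_refl γ
    · rw [ha]; exact hγ b hb
    · rw [hb]; exact arcNoncross_symm (hγ a ha)
    · exact hmax.prop a ha b hb
  exact hmax.2 hT' (Set.subset_insert _ _) (Set.mem_insert _ _)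

end Aux
section Geom

variable {n : ℕ} (P : ConvexPolygon n)

lemma ConvexPolygon.vertex_mem_body {u : Pt} (hu : u ∈ P.V) : u ∈ P.body :=
  subset_convexHull ℝ _ hu

lemma ConvexPolygon.exists_other_vertex (i : Fin n) :
    (Set.range P.vtx \ {P.vtx i}).Nonempty := by
  have h3 := P.three_le
  have : Nontrivial (Fin n) := Fin.nontrivial_iff_two_le.mpr (by omega)
  obtain ⟨j, hj⟩ := exists_ne i
  exact ⟨P.vtx j, ⟨j, rfl⟩, by simpa using P.inj.ne hj⟩

/-- A vertex of a convex polygon is not in the relative interior of a segment joining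
two distinct points of the body. -/
lemma ConvexPolygon.vertex_not_mem_openSegment {u x y : Pt} (hu : u ∈ P.V)
    (hx : x ∈ P.body) (hy : y ∈ P.body) (hxy : x ≠ y) : u ∉ openSegment ℝ x y := by
  intro h
  obtain ⟨i, rfl⟩ := hu
  have hcp := P.convexPos i
  set C : Set Pt := convexHull ℝ (Set.range P.vtx \ {P.vtx i}) with hC
  have hVins : (Set.range P.vtx : Set Pt) =
      insert (P.vtx i) (Set.range P.vtx \ {P.vtx i}) := by
    have hmem : P.vtx i ∈ Set.range P.vtx := ⟨i, rfl⟩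
    rw [Set.insert_diff_singleton, Set.insert_eq_self.mpr hmem]
  have hbody : P.body = ⋃ z ∈ C, segment ℝ (P.vtx i) z := by
    rw [ConvexPolygon.body, ConvexPolygon.V, hVins,
      convexHull_insert (P.exists_other_vertex i), convexJoin_singleton_left]
  rw [hbody] at hx hy
  simp only [Set.mem_iUnion, exists_prop] at hx hy
  obtain ⟨x', hx', ⟨a, a', ha, ha', haa, hxe⟩⟩ := hx
  obtain ⟨y', hy', ⟨b, b', hb, hb', hbb, hye⟩⟩ := hy
  obtain ⟨t, t', ht, ht', htt, hte⟩ := h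
  set u := P.vtx i with hudef
  set μ : ℝ := t * a' + t' * b' with hμ
  have hsum2 : t * a + t' * b = 1 - μ := by
    have h1 : a' = 1 - a := by linarith
    have h2 : b' = 1 - b := by linarith
    show t * a + t' * b = 1 - (t * a' + t' * b')
    rw [h1, h2]; linear_combination htt
  rw [← hxe, ← hye] at hte
  have h2 : (t*a + t'*b) • u + ((t*a') • x' + (t'*b') • y') = u := by
    linear_combination (norm := module) hte
  have key : μ • u = (t*a') • x' + (t'*b') • y' := by
    rw [hsum2, sub_smul, one_smul] at h2
    linear_combination (norm := module) -h2
  rcases eq_or_lt_of_le (add_nonneg (mul_nonneg ht.le ha') (mul_nonneg ht'.le hb')) with hμ0 | hμ0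
  · -- μ = 0 : both coefficients vanish, so x = u = y
    have h4 : t * a' = 0 ∧ t' * b' = 0 := by
      constructor <;> nlinarith [mul_nonneg ht.le ha', mul_nonneg ht'.le hb']
    have ha'0 : a' = 0 := by
      rcases mul_eq_zero.mp h4.1 with h | h
      · exact absurd h (ne_of_gt ht)
      · exact h
    have hb'0 : b' = 0 := by
      rcases mul_eq_zero.mp h4.2 with h | h
      · exact absurd h (ne_of_gt ht')
      · exact h
    have hxu : x = u := by
      rw [← hxe, ha'0, (show a = 1 by linarith)]; module
    have hyu : y = u := by
      rw [← hye, hb'0, (show b = 1 by linarith)]; module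
    exact hxy (hxu.trans hyu.symm)
  · -- μ > 0 : u is a convex combination of x', y' ∈ C, contradiction
    have hu' : u = (μ⁻¹*(t*a')) • x' + (μ⁻¹*(t'*b')) • y' := by
      have h6 := congrArg (fun z : Pt => μ⁻¹ • z) key
      simp only [smul_smul, smul_add] at h6
      rw [inv_mul_cancel₀ (ne_of_gt hμ0), one_smul] at h6
      exact h6
    have hmem : (μ⁻¹*(t*a')) • x' + (μ⁻¹*(t'*b')) • y' ∈ C := by
      refine (convex_convexHull ℝ _) hx' hy' ?_ ?_ ?_
      · positivity
      · positivity
      · rw [← mul_add, ← hμ, inv_mul_cancel₀ (ne_of_gt hμ0)]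
    rw [← hu'] at hmem
    exact hcp hmem

/-- No vertex lies in the interior of the body. -/
lemma ConvexPolygon.not_vertex_of_mem_interior {q : Pt}
    (hq : q ∈ interior P.body) : q ∉ P.V := by
  intro hqV
  obtain ⟨ε, hε, hball⟩ := Metric.isOpen_iff.mp isOpen_interior q hq
  set e1 : Pt := EuclideanSpace.single (0 : Fin 2) (1:ℝ) with he1
  have hne1 : ‖e1‖ = 1 := by simp [he1, EuclideanSpace.norm_single]
  have he1ne : e1 ≠ 0 := by
    intro h; rw [h, norm_zero] at hne1; exact one_ne_zero hne1.symm
  set x : Pt := q + (ε/2) • e1 with hxdef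
  set y : Pt := q - (ε/2) • e1 with hydef
  have hdx : dist x q < ε := by
    rw [hxdef, dist_eq_norm, add_sub_cancel_left, norm_smul, hne1, Real.norm_eq_abs,
      abs_of_pos (half_pos hε), mul_one]
    linarith
  have hdy : dist y q < ε := by
    rw [hydef, dist_eq_norm, sub_sub_cancel_left, norm_neg, norm_smul, hne1,
      Real.norm_eq_abs, abs_of_pos (half_pos hε), mul_one]
    linarith
  have hxmem : x ∈ P.body := interior_subset (hball hdx)
  have hymem : y ∈ P.body := interior_subset (hball hdy)
  have hxy : x ≠ y := by
    intro h
    have hsub : x - y = ε • e1 := by rw [hxdef, hydef]; module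
    rw [h, sub_self] at hsub
    rcases smul_eq_zero.mp hsub.symm with h' | h'
    · exact (ne_of_gt hε) h'
    · exact he1ne h'
  have hq' : q ∈ openSegment ℝ x y :=
    ⟨1/2, 1/2, by norm_num, by norm_num, by norm_num, by rw [hxdef, hydef]; module⟩
  exact P.vertex_not_mem_openSegment hqV hxmem hymem hxy hq'

end Geom
set_option maxHeartbeats 2000000 in

/-- For every punctured convex Euclidean `n`-gon `P⋆` (i.e., for
every placement of the puncture `p` in the interior of the convex `n`-gon `P`), the
natural simplicial embedding of the geometric flip-graph `ℱ(P⋆)` into the topological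
flip-graph `𝒯ₙ` (modeled on the disk `P.body` with marked points the vertices of `P`
and `p`) is never surjective: there is a triangulation of the once-punctured disk
`Δ⋆ₙ` whose isotopy class is not realized by any triangulation of `P⋆`. -/
theorem geometric_embedding_never_onto (n : ℕ) (P : ConvexPolygon n)
    (p : Pt) (hp : p ∈ interior P.body) :
    ∃ A : {T : Set (Arc P.body (insert p P.V)) //
        IsTopTriangulation P.body (insert p P.V) T},
      ¬ InGeomImage P p A.1 := by
  classical
  have h3 := P.three_le
  set v : Pt := P.vtx ⟨0, by omega⟩ with hvdef
  have hv : v ∈ P.V := ⟨_, rfl⟩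
  have hpv : p ≠ v := fun h => P.not_vertex_of_mem_interior hp (h ▸ hv)
  obtain ⟨ε, hε, hball⟩ := Metric.isOpen_iff.mp isOpen_interior p hp
  set d : Pt := p - v with hd
  have hdne : d ≠ 0 := sub_ne_zero.mpr hpv
  set e : Pt := EuclideanSpace.single (0 : Fin 2) (-(d 1)) +
    EuclideanSpace.single (1 : Fin 2) (d 0) with he
  have he0 : e 0 = -(d 1) := by simp [he, EuclideanSpace.single_apply]
  have he1 : e 1 = d 0 := by simp [he, EuclideanSpace.single_apply]
  have hdcoord : d 0 ≠ 0 ∨ d 1 ≠ 0 := by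
    by_contra hcon
    push_neg at hcon
    apply hdne
    ext i
    fin_cases i
    · exact hcon.1
    · exact hcon.2
  have hdsq : 0 < d 0 ^ 2 + d 1 ^ 2 := by
    rcases hdcoord with h | h
    · have h1 := sq_nonneg (d 1)
      have h2 : 0 < d 0 ^ 2 := by positivity
      linarith
    · have h1 := sq_nonneg (d 0)
      have h2 : 0 < d 1 ^ 2 := by positivity
      linarith
  have hlin : ∀ a c : ℝ, a • d + c • e = 0 → a = 0 ∧ c = 0 := by
    intro a c hab
    have h0 := congrArg (fun z : Pt => z 0) hab
    have h1 := congrArg (fun z : Pt => z 1) hab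
    simp only [PiLp.add_apply, PiLp.smul_apply, smul_eq_mul, he0, he1, PiLp.zero_apply] at h0 h1
    have h0' : a * d 0 - c * d 1 = 0 := by linear_combination h0
    have h1' : a * d 1 + c * d 0 = 0 := by linear_combination h1
    have ha0 : a = 0 := by
      have hkey : a * (d 0 ^ 2 + d 1 ^ 2) = 0 := by
        linear_combination (d 0) * h0' + (d 1) * h1'
      rcases mul_eq_zero.mp hkey with h | h
      · exact h
      · exfalso; linarith
    refine ⟨ha0, ?_⟩
    have hkey : c * (d 0 ^ 2 + d 1 ^ 2) = 0 := by
      linear_combination (d 0) * h1' - (d 1) * h0'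
    rcases mul_eq_zero.mp hkey with h | h
    · exact h
    · exfalso; linarith
  have hene : e ≠ 0 := by
    intro h
    have := (hlin 0 1 (by rw [h]; module)).2
    norm_num at this
  -- δ small enough
  set R : ℝ := ‖d‖ + ‖e‖ + 1 with hR
  have hR0 : 0 < R := by positivity
  set δ : ℝ := ε / (2 * R) with hδ
  have hδ0 : 0 < δ := by positivity
  have hδR : δ * R = ε / 2 := by rw [hδ]; field_simp
  have hδ1 : (0:ℝ) < 1 + δ := by linarith
  set w₁ : Pt := p + δ • d + δ • e with hw₁
  set w₂ : Pt := p + δ • d - δ • e with hw₂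
  have hnd : ‖δ • d‖ = δ * ‖d‖ := by
    rw [norm_smul, Real.norm_eq_abs, abs_of_pos hδ0]
  have hne : ‖δ • e‖ = δ * ‖e‖ := by
    rw [norm_smul, Real.norm_eq_abs, abs_of_pos hδ0]
  have hdistbound : δ * ‖d‖ + δ * ‖e‖ < ε := by
    have h1 : δ * (‖d‖ + ‖e‖) ≤ δ * R := by
      apply mul_le_mul_of_nonneg_left _ hδ0.le
      rw [hR]; linarith
    nlinarith
  have hw₁mem : w₁ ∈ interior P.body := by
    apply hball
    have hsub : w₁ - p = δ • d + δ • e := by rw [hw₁]; abel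
    rw [mem_ball, dist_eq_norm, hsub]
    calc ‖δ • d + δ • e‖ ≤ ‖δ • d‖ + ‖δ • e‖ := norm_add_le _ _
      _ = δ * ‖d‖ + δ * ‖e‖ := by rw [hnd, hne]
      _ < ε := hdistbound
  have hw₂mem : w₂ ∈ interior P.body := by
    apply hball
    have hsub : w₂ - p = δ • d - δ • e := by rw [hw₂]; abel
    rw [mem_ball, dist_eq_norm, hsub]
    calc ‖δ • d - δ • e‖ ≤ ‖δ • d‖ + ‖δ • e‖ := norm_sub_le _ _
      _ = δ * ‖d‖ + δ * ‖e‖ := by rw [hnd, hne]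
      _ < ε := hdistbound
  -- the three vertices of the triangle
  set q : Fin 3 → Pt := ![v, w₁, w₂] with hq
  have hq0 : q 0 = v := rfl
  have hq1 : q 1 = w₁ := rfl
  have hq2 : q 2 = w₂ := rfl
  have hind : AffineIndependent ℝ q := by
    rw [affineIndependent_iff_of_fintype]
    intro w hsum hcomb
    rw [Finset.weightedVSub_eq_linear_combination _ hsum] at hcomb
    rw [Fin.sum_univ_three] at hsum hcomb
    rw [hq0, hq1, hq2] at hcomb
    have hps : w 0 • v + w 1 • w₁ + w 2 • w₂ = (w 0 + w 1 + w 2) • v +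
        ((w 1 + w 2) * (1 + δ)) • d + ((w 1 - w 2) * δ) • e := by
      rw [hw₁, hw₂, hd]; module
    rw [hps, hsum, zero_smul, zero_add] at hcomb
    obtain ⟨h1, h2⟩ := hlin _ _ hcomb
    have hw12 : w 1 + w 2 = 0 := by
      rcases mul_eq_zero.mp h1 with h | h
      · exact h
      · exfalso; linarith
    have hw12' : w 1 - w 2 = 0 := by
      rcases mul_eq_zero.mp h2 with h | h
      · exact h
      · exact absurd h (ne_of_gt hδ0)
    intro i
    fin_cases i
    · show w 0 = 0; linarith
    · show w 1 = 0; linarith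
    · show w 2 = 0; linarith
  have htot : affineSpan ℝ (Set.range q) = ⊤ := by
    rw [hind.affineSpan_eq_top_iff_card_eq_finrank_add_one]
    simp [finrank_euclideanSpace_fin]
  set b : AffineBasis (Fin 3) ℝ Pt := ⟨q, hind, htot⟩ with hb
  have hbcoe : ⇑b = q := rfl
  -- barycentric coordinates of p
  set α : ℝ := δ / (1 + δ) with hα
  set β : ℝ := 1 / (2 * (1 + δ)) with hβ
  have hα0 : 0 < α := by positivity
  have hβ0 : 0 < β := by positivity
  have hsumw : ∑ i, (![α, β, β] : Fin 3 → ℝ) i = 1 := by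
    rw [Fin.sum_univ_three]
    show α + β + β = 1
    rw [hα, hβ]; field_simp; ring
  have hcombp : Finset.univ.affineCombination ℝ q ![α, β, β] = p := by
    rw [Finset.affineCombination_eq_linear_combination _ _ _ hsumw, Fin.sum_univ_three]
    show α • q 0 + β • q 1 + β • q 2 = p
    rw [hq0, hq1, hq2, hw₁, hw₂, hd, hα, hβ]
    match_scalars <;> (field_simp; try ring)
  have hcoordp : ∀ k, b.coord k p = ![α, β, β] k := by
    intro k
    rw [← hcombp]
    exact b.coord_apply_combination_of_mem (Finset.mem_univ k) hsumw
  have hcp0 : b.coord 0 p = α := hcoordp 0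
  have hcp1 : b.coord 1 p = β := hcoordp 1
  have hcp2 : b.coord 2 p = β := hcoordp 2
  -- coordinates along the edges
  have hlmap : ∀ (i j : Fin 3) (s : ℝ) (m : Fin 3),
      b.coord m (AffineMap.lineMap (q i) (q j) s) =
        (1 - s) * (if m = i then 1 else 0) + s * (if m = j then 1 else 0) := by
    intro i j s m
    rw [show q i = b i from rfl, show q j = b j from rfl,
      (b.coord m).apply_lineMap, AffineMap.lineMap_apply_module]
    simp only [smul_eq_mul, AffineBasis.coord_apply]
  -- the piecewise-linear triangle loop
  set F : ℝ → Pt := fun t =>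
    if t ≤ 1/3 then AffineMap.lineMap v w₁ (3*t)
    else if t ≤ 2/3 then AffineMap.lineMap w₁ w₂ (3*t - 1)
    else AffineMap.lineMap w₂ v (3*t - 2) with hF
  have hFc : Continuous F := by
    rw [hF]
    apply Continuous.if_le
    · exact AffineMap.lineMap_continuous.comp (continuous_const.mul continuous_id)
    · apply Continuous.if_le
      · exact AffineMap.lineMap_continuous.comp ((continuous_const.mul continuous_id).sub continuous_const)
      · exact AffineMap.lineMap_continuous.comp ((continuous_const.mul continuous_id).sub continuous_const)
      · exact continuous_id
      · exact continuous_const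
      · intro t ht
        subst ht
        norm_num [AffineMap.lineMap_apply_one, AffineMap.lineMap_apply_zero]
    · exact continuous_id
    · exact continuous_const
    · intro t ht
      subst ht
      norm_num [AffineMap.lineMap_apply_one, AffineMap.lineMap_apply_zero]
  have hFbr1 : ∀ t : ℝ, t ≤ 1/3 → F t = AffineMap.lineMap (q 0) (q 1) (3*t) := by
    intro t ht; rw [hF]; simp only [if_pos ht, hq0, hq1]
  have hFbr2 : ∀ t : ℝ, 1/3 < t → t ≤ 2/3 → F t = AffineMap.lineMap (q 1) (q 2) (3*t - 1) := by
    intro t ht ht'; rw [hF]; simp only [if_neg (not_le.mpr ht), if_pos ht', hq1, hq2]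
  have hFbr3 : ∀ t : ℝ, 2/3 < t → F t = AffineMap.lineMap (q 2) (q 0) (3*t - 2) := by
    intro t ht
    rw [hF]
    simp only [if_neg (not_le.mpr ((by norm_num : (1:ℝ)/3 < 2/3).trans ht)),
      if_neg (not_le.mpr ht), hq0, hq2]
  have hcoord1 : ∀ t : ℝ, t ≤ 1/3 → b.coord 0 (F t) = 1 - 3*t ∧
      b.coord 1 (F t) = 3*t ∧ b.coord 2 (F t) = 0 := by
    intro t ht
    refine ⟨?_, ?_, ?_⟩
    · rw [hFbr1 t ht, hlmap, if_pos rfl, if_neg (by decide)]; ring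
    · rw [hFbr1 t ht, hlmap, if_neg (by decide), if_pos rfl]; ring
    · rw [hFbr1 t ht, hlmap, if_neg (by decide), if_neg (by decide)]; ring
  have hcoord2 : ∀ t : ℝ, 1/3 < t → t ≤ 2/3 → b.coord 0 (F t) = 0 ∧
      b.coord 1 (F t) = 2 - 3*t ∧ b.coord 2 (F t) = 3*t - 1 := by
    intro t ht ht'
    refine ⟨?_, ?_, ?_⟩
    · rw [hFbr2 t ht ht', hlmap, if_neg (by decide), if_neg (by decide)]; ring
    · rw [hFbr2 t ht ht', hlmap, if_pos rfl, if_neg (by decide)]; ring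
    · rw [hFbr2 t ht ht', hlmap, if_neg (by decide), if_pos rfl]; ring
  have hcoord3 : ∀ t : ℝ, 2/3 < t → b.coord 0 (F t) = 3*t - 2 ∧
      b.coord 1 (F t) = 0 ∧ b.coord 2 (F t) = 3 - 3*t := by
    intro t ht
    refine ⟨?_, ?_, ?_⟩
    · rw [hFbr3 t ht, hlmap, if_neg (by decide), if_pos rfl]; ring
    · rw [hFbr3 t ht, hlmap, if_neg (by decide), if_neg (by decide)]; ring
    · rw [hFbr3 t ht, hlmap, if_pos rfl, if_neg (by decide)]; ring
  have hF0 : F 0 = v := by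
    rw [hF]; norm_num [AffineMap.lineMap_apply_zero]
  have hF1 : F 1 = v := by
    rw [hF]; norm_num [AffineMap.lineMap_apply_one]
  have hmain : ∀ t ∈ Icc (0:ℝ) 1, ∀ t' ∈ Icc (0:ℝ) 1, F t = F t' →
      t = t' ∨ (t = 0 ∧ t' = 1) ∨ (t = 1 ∧ t' = 0) := by
    intro t ht t' ht' heq
    have e0 := congrArg (b.coord 0) heq
    have e1 := congrArg (b.coord 1) heq
    have e2 := congrArg (b.coord 2) heq
    rcases le_or_gt t (1/3) with h1 | h1 <;> rcases le_or_gt t' (1/3) with h1' | h1'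
    · obtain ⟨-, c1, -⟩ := hcoord1 t h1
      obtain ⟨-, c1', -⟩ := hcoord1 t' h1'
      rw [c1, c1'] at e1
      left; linarith
    · rcases le_or_gt t' (2/3) with h2' | h2'
      · obtain ⟨c0, c1, -⟩ := hcoord1 t h1
        obtain ⟨c0', c1', -⟩ := hcoord2 t' h1' h2'
        rw [c0, c0'] at e0; rw [c1, c1'] at e1
        exfalso; linarith
      · obtain ⟨c0, c1, -⟩ := hcoord1 t h1
        obtain ⟨c0', c1', -⟩ := hcoord3 t' h2'
        rw [c0, c0'] at e0; rw [c1, c1'] at e1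
        right; left; constructor <;> linarith
    · rcases le_or_gt t (2/3) with h2 | h2
      · obtain ⟨c0, c1, -⟩ := hcoord2 t h1 h2
        obtain ⟨c0', c1', -⟩ := hcoord1 t' h1'
        rw [c0, c0'] at e0; rw [c1, c1'] at e1
        exfalso; linarith
      · obtain ⟨c0, c1, -⟩ := hcoord3 t h2
        obtain ⟨c0', c1', -⟩ := hcoord1 t' h1'
        rw [c0, c0'] at e0; rw [c1, c1'] at e1
        right; right; constructor <;> linarith
    · rcases le_or_gt t (2/3) with h2 | h2 <;> rcases le_or_gt t' (2/3) with h2' | h2'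
      · obtain ⟨-, -, c2⟩ := hcoord2 t h1 h2
        obtain ⟨-, -, c2'⟩ := hcoord2 t' h1' h2'
        rw [c2, c2'] at e2
        left; linarith
      · obtain ⟨c0, -, -⟩ := hcoord2 t h1 h2
        obtain ⟨c0', -, -⟩ := hcoord3 t' h2'
        rw [c0, c0'] at e0
        exfalso; linarith
      · obtain ⟨c0, -, -⟩ := hcoord3 t h2
        obtain ⟨c0', -, -⟩ := hcoord2 t' h1' h2'
        rw [c0, c0'] at e0
        exfalso; linarith
      · obtain ⟨c0, -, -⟩ := hcoord3 t h2
        obtain ⟨c0', -, -⟩ := hcoord3 t' h2'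
        rw [c0, c0'] at e0
        left; linarith
  -- basic distinctness and membership facts
  have hvB : v ∈ P.body := P.vertex_mem_body hv
  have hw₁B : w₁ ∈ P.body := interior_subset hw₁mem
  have hw₂B : w₂ ∈ P.body := interior_subset hw₂mem
  have hqinj := hind.injective
  have hvw₁ : v ≠ w₁ := by
    rw [← hq0, ← hq1]; exact fun h => (by decide : (0:Fin 3) ≠ 1) (hqinj h)
  have hvw₂ : v ≠ w₂ := by
    rw [← hq0, ← hq2]; exact fun h => (by decide : (0:Fin 3) ≠ 2) (hqinj h)
  have hw₁w₂ : w₁ ≠ w₂ := by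
    rw [← hq1, ← hq2]; exact fun h => (by decide : (1:Fin 3) ≠ 2) (hqinj h)
  have hqB : ∀ m : Fin 3, q m ∈ P.body := by
    intro m; fin_cases m
    · exact hvB
    · exact hw₁B
    · exact hw₂B
  have hconvB : Convex ℝ P.body := convex_convexHull ℝ _
  have hbodyF : ∀ (i j : Fin 3) (s : ℝ), s ∈ Icc (0:ℝ) 1 →
      AffineMap.lineMap (q i) (q j) s ∈ P.body := by
    intro i j s hs
    apply hconvB.segment_subset (hqB i) (hqB j)
    rw [segment_eq_image_lineMap]
    exact ⟨s, hs, rfl⟩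
  have hopenSeg : ∀ (i j : Fin 3) (s : ℝ), s ∈ Ioo (0:ℝ) 1 →
      AffineMap.lineMap (q i) (q j) s ∈ openSegment ℝ (q i) (q j) := by
    intro i j s hs
    rw [openSegment_eq_image_lineMap]
    exact ⟨s, hs, rfl⟩
  have hFnotp : ∀ t : ℝ, t ∈ Icc (0:ℝ) 1 → F t ≠ p := by
    intro t ht heqp
    rcases le_or_gt t (1/3) with h1 | h1
    · have hz := (hcoord1 t h1).2.2
      rw [heqp, hcp2] at hz
      linarith
    · rcases le_or_gt t (2/3) with h2 | h2
      · have hz := (hcoord2 t h1 h2).1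
        rw [heqp, hcp0] at hz
        linarith
      · have hz := (hcoord3 t h2).2.1
        rw [heqp, hcp1] at hz
        linarith
  have hFnotV : ∀ t : ℝ, t ∈ Ioo (0:ℝ) 1 → F t ∉ P.V := by
    intro t ht hV
    rcases le_or_gt t (1/3) with h1 | h1
    · rcases eq_or_lt_of_le h1 with h1e | h1l
      · have hFw : F t = w₁ := by
          rw [hFbr1 t h1, h1e]
          norm_num [AffineMap.lineMap_apply_one, hq1]
        rw [hFw] at hV
        exact P.not_vertex_of_mem_interior hw₁mem hV
      · have hmem := hopenSeg 0 1 (3*t) ⟨by linarith [ht.1], by linarith⟩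
        rw [← hFbr1 t h1, hq0, hq1] at hmem
        exact P.vertex_not_mem_openSegment hV hvB hw₁B hvw₁ hmem
    · rcases le_or_gt t (2/3) with h2 | h2
      · rcases eq_or_lt_of_le h2 with h2e | h2l
        · have hFw : F t = w₂ := by
            rw [hFbr2 t h1 h2, h2e]
            norm_num [AffineMap.lineMap_apply_one, hq2]
          rw [hFw] at hV
          exact P.not_vertex_of_mem_interior hw₂mem hV
        · have hmem := hopenSeg 1 2 (3*t-1) ⟨by linarith, by linarith⟩
          rw [← hFbr2 t h1 h2, hq1, hq2] at hmem
          exact P.vertex_not_mem_openSegment hV hw₁B hw₂B hw₁w₂ hmem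
      · have hmem := hopenSeg 2 0 (3*t-2) ⟨by linarith, by linarith [ht.2]⟩
        rw [← hFbr3 t h2, hq2, hq0] at hmem
        exact P.vertex_not_mem_openSegment hV hw₂B hvB (fun h => hvw₂ h.symm) hmem
  -- the triangle and its frontier
  set Tr : Set Pt := convexHull ℝ (Set.range q) with hTr
  have hbrange : Set.range ⇑b = Set.range q := rfl
  have hTrco : Tr = {x | ∀ m, 0 ≤ b.coord m x} := by
    rw [hTr, ← hbrange, b.convexHull_eq_nonneg_coord]
  have hTrint : interior Tr = {x | ∀ m, 0 < b.coord m x} := by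
    rw [hTr, ← hbrange, b.interior_convexHull]
  have hTrclosed : IsClosed Tr := (Set.finite_range q).isClosed_convexHull (𝕜 := ℝ)
  have hqTr : ∀ m : Fin 3, q m ∈ Tr := fun m => subset_convexHull ℝ _ ⟨m, rfl⟩
  have hlineTr : ∀ (i j : Fin 3) (s : ℝ), s ∈ Icc (0:ℝ) 1 →
      AffineMap.lineMap (q i) (q j) s ∈ Tr := by
    intro i j s hs
    apply (convex_convexHull ℝ _).segment_subset (hqTr i) (hqTr j)
    rw [segment_eq_image_lineMap]
    exact ⟨s, hs, rfl⟩
  have hKrepr : F '' Icc (0:ℝ) 1 = Tr \ interior Tr := by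
    apply Set.Subset.antisymm
    · rintro x ⟨t, ht, rfl⟩
      constructor
      · rcases le_or_gt t (1/3) with h1 | h1
        · rw [hFbr1 t h1]; exact hlineTr 0 1 (3*t) ⟨by linarith [ht.1], by linarith⟩
        · rcases le_or_gt t (2/3) with h2 | h2
          · rw [hFbr2 t h1 h2]; exact hlineTr 1 2 (3*t-1) ⟨by linarith, by linarith⟩
          · rw [hFbr3 t h2]; exact hlineTr 2 0 (3*t-2) ⟨by linarith, by linarith [ht.2]⟩
      · intro hint
        rw [hTrint] at hint
        rcases le_or_gt t (1/3) with h1 | h1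
        · have hz := (hcoord1 t h1).2.2
          have := hint 2
          linarith
        · rcases le_or_gt t (2/3) with h2 | h2
          · have hz := (hcoord2 t h1 h2).1
            have := hint 0
            linarith
          · have hz := (hcoord3 t h2).2.1
            have := hint 1
            linarith
    · rintro x ⟨hxT, hxnotint⟩
      have hnon : ∀ m, 0 ≤ b.coord m x := by rw [hTrco] at hxT; exact hxT
      have hsum1 : b.coord 0 x + b.coord 1 x + b.coord 2 x = 1 := by
        have h := b.sum_coord_apply_eq_one x
        rwa [Fin.sum_univ_three] at h
      have hzero : ∃ m, b.coord m x = 0 := by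
        by_contra hcon
        push_neg at hcon
        apply hxnotint
        rw [hTrint]
        exact fun m => lt_of_le_of_ne (hnon m) (Ne.symm (hcon m))
      have hsumco : ∑ i, b.coord i x = 1 := b.sum_coord_apply_eq_one x
      have hxrepr : x = b.coord 0 x • v + b.coord 1 x • w₁ + b.coord 2 x • w₂ := by
        have h := b.affineCombination_coord_eq_self x
        rw [Finset.affineCombination_eq_linear_combination _ _ _ hsumco,
          Fin.sum_univ_three] at h
        exact h.symm
      have h0 := hnon 0
      have h1 := hnon 1
      have h2 := hnon 2
      set c0 := b.coord 0 x with hc0d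
      set c1 := b.coord 1 x with hc1d
      set c2 := b.coord 2 x with hc2d
      obtain ⟨m, hm⟩ := hzero
      fin_cases m
      · -- coord 0 = 0 : on edge w₁ w₂
        rw [show ((⟨0, by norm_num⟩ : Fin 3) : Fin 3) = 0 from rfl, ← hc0d] at hm
        rcases eq_or_lt_of_le h2 with h2e | h2l
        · refine ⟨1/3, ⟨by norm_num, by norm_num⟩, ?_⟩
          rw [hFbr1 (1/3) (le_refl _)]
          norm_num [AffineMap.lineMap_apply_one, hq1]
          rw [hxrepr, hm, ← h2e, show c1 = 1 by linarith]
          module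
        · refine ⟨(c2 + 1)/3, ⟨by linarith, by linarith⟩, ?_⟩
          rw [hFbr2 _ (by linarith) (by linarith),
            show 3*((c2 + 1)/3) - 1 = c2 by ring,
            AffineMap.lineMap_apply_module, hq1, hq2, hxrepr, hm,
            show c1 = 1 - c2 by linarith]
          module
      · -- coord 1 = 0 : on edge w₂ v
        rw [show ((⟨1, by norm_num⟩ : Fin 3) : Fin 3) = 1 from rfl, ← hc1d] at hm
        rcases eq_or_lt_of_le h0 with h0e | h0l
        · refine ⟨2/3, ⟨by norm_num, by norm_num⟩, ?_⟩
          rw [hFbr2 (2/3) (by norm_num) (le_refl _)]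
          norm_num [AffineMap.lineMap_apply_one, hq2]
          rw [hxrepr, hm, ← h0e, show c2 = 1 by linarith]
          module
        · refine ⟨(c0 + 2)/3, ⟨by linarith, by linarith⟩, ?_⟩
          rw [hFbr3 _ (by linarith),
            show 3*((c0 + 2)/3) - 2 = c0 by ring,
            AffineMap.lineMap_apply_module, hq2, hq0, hxrepr, hm,
            show c2 = 1 - c0 by linarith]
          module
      · -- coord 2 = 0 : on edge v w₁
        rw [show ((⟨2, by norm_num⟩ : Fin 3) : Fin 3) = 2 from rfl, ← hc2d] at hm
        refine ⟨c1/3, ⟨by linarith, by linarith⟩, ?_⟩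
        rw [hFbr1 _ (by linarith),
          show 3*(c1/3) = c1 by ring,
          AffineMap.lineMap_apply_module, hq0, hq1, hxrepr, hm,
          show c0 = 1 - c1 by linarith]
        module
  have hLcompl : (F '' Icc (0:ℝ) 1)ᶜ = interior Tr ∪ Trᶜ := by
    rw [hKrepr, Set.diff_eq, Set.compl_inter, compl_compl, Set.union_comm]
  have hpint : p ∈ interior Tr := by
    rw [hTrint]
    intro m
    rw [hcoordp m]
    fin_cases m
    · simpa using hα0
    · simpa using hβ0
    · simpa using hβ0
  have hpcompl : p ∈ (F '' Icc (0:ℝ) 1)ᶜ := by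
    rw [hLcompl]; exact Or.inl hpint
  have hbdd : IsBounded (connectedComponentIn ((F '' Icc (0:ℝ) 1)ᶜ) p) := by
    have hsub2 : connectedComponentIn ((F '' Icc (0:ℝ) 1)ᶜ) p ⊆ interior Tr ∪ Trᶜ := by
      rw [← hLcompl]
      exact connectedComponentIn_subset _ _
    rcases (isPreconnected_connectedComponentIn).subset_or_subset isOpen_interior
      hTrclosed.isOpen_compl (disjoint_compl_right.mono_left interior_subset) hsub2 with hs | hs
    · refine ((isBounded_convexHull.mpr (Set.finite_range q).isBounded).subset ?_)
      rw [← hTr]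
      exact hs.trans interior_subset
    · exfalso
      exact (hs (mem_connectedComponentIn hpcompl)) (interior_subset hpint)
  -- the loop arc
  set a₀ : PreArc P.body (insert p P.V) :=
    { f := F
      cont := hFc.continuousOn
      ends0 := by rw [hF0]; exact Set.mem_insert_of_mem _ hv
      ends1 := by rw [hF1]; exact Set.mem_insert_of_mem _ hv
      inj := by
        intro t ht t' ht' heq
        rcases hmain t (Set.Ioo_subset_Icc_self ht) t' (Set.Ioo_subset_Icc_self ht') heq
          with h | h | h
        · exact h
        · exact absurd h.1 (ne_of_gt ht.1)
        · exact absurd h.1 (ne_of_lt ht.2)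
      ne_ends := by
        intro t ht
        constructor
        · intro heq
          rcases hmain t (Set.Ioo_subset_Icc_self ht) 0 (by norm_num) heq with h | h | h
          · exact absurd h (ne_of_gt ht.1)
          · exact absurd h.1 (ne_of_gt ht.1)
          · exact absurd h.1 (ne_of_lt ht.2)
        · intro heq
          rcases hmain t (Set.Ioo_subset_Icc_self ht) 1 (by norm_num) heq with h | h | h
          · exact absurd h (ne_of_lt ht.2)
          · exact absurd h.1 (ne_of_gt ht.1)
          · exact absurd h.1 (ne_of_lt ht.2)
      mem := by
        intro t ht
        constructor
        · rcases le_or_gt t (1/3) with h1 | h1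
          · rw [hFbr1 t h1]; exact hbodyF 0 1 (3*t) ⟨by linarith [ht.1], by linarith⟩
          · rcases le_or_gt t (2/3) with h2 | h2
            · rw [hFbr2 t h1 h2]; exact hbodyF 1 2 (3*t-1) ⟨by linarith, by linarith⟩
            · rw [hFbr3 t h2]; exact hbodyF 2 0 (3*t-2) ⟨by linarith, by linarith [ht.2]⟩
        · intro hM
          rcases Set.mem_insert_iff.mp hM with hM | hM
          · exact hFnotp t (Set.Ioo_subset_Icc_self ht) hM
          · exact hFnotV t ht hM
      essential := fun _ => ⟨p, Set.mem_insert _ _, by rw [hF0]; exact hpv, hbdd⟩ }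
    with ha₀
  obtain ⟨T', hT'sub, hT'tri⟩ := exists_topTriangulation {a₀.cls}
    (by
      intro γ hγ δ hδ
      rw [Set.mem_singleton_iff] at hγ hδ
      rw [hγ, hδ]
      exact arcNoncross_refl _)
  refine ⟨⟨T', hT'tri⟩, ?_⟩
  rintro ⟨S, -, hAS⟩
  have hAS' : T' = topOf P.body (insert p P.V) S := hAS
  have hmem0 : a₀.cls ∈ T' := hT'sub (Set.mem_singleton _)
  rw [hAS'] at hmem0
  obtain ⟨x, y, hx, hy, hxy, hsubseg, -, hcls⟩ := hmem0
  have h1 : arcEnds a₀.cls = (v, v) := by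
    rw [arcEnds_cls, show a₀.f = F from rfl, hF0, hF1]
  have h2 : arcEnds a₀.cls = (x, y) := by
    rw [hcls, arcEnds_cls]
    have hfx : (segPreArc P.body (insert p P.V) x y hx hy hxy hsubseg).f 0 = x := by
      simp [segPreArc]
    have hfy : (segPreArc P.body (insert p P.V) x y hx hy hxy hsubseg).f 1 = y := by
      simp [segPreArc]
    rw [hfx, hfy]
  rw [h1] at h2
  simp only [Prod.mk.injEq] at h2
  exact hxy (h2.1.symm.trans h2.2)

end
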